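/- Let γ ∈ (0,1], α > γ + 1, C > 0, and let K(s,t) = ∑_{j>=2} C j^(-α) * 2 * cos(jπs) * cos(jπt) (plus the constant term, which cancels). Then for all s, t ∈ [0,1], K(s,s) - 2K(s,t) + K(t,t) <= C * 2^(3-γ) * π^γ * (1/(α-γ-1)) * |t-s|^γ. -/

import Mathlib

open Real

/-- Lipschitz bound for cosine. -/
lemma my_cos_lip (x y : ℝ) : |Real.cos x - Real.cos y| ≤ |x - y| := by
  rw [Real.cos_sub_cos]
  calc |(-2) * Real.sin ((x + y) / 2) * Real.sin ((x - y) / 2)|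
      = 2 * |Real.sin ((x + y) / 2)| * |Real.sin ((x - y) / 2)| := by
        rw [abs_mul, abs_mul]; norm_num
    _ ≤ 2 * 1 * |(x - y) / 2| := by
        have hA := Real.abs_sin_le_one ((x + y) / 2)
        have hB : |Real.sin ((x - y) / 2)| ≤ |(x - y) / 2| := Real.abs_sin_le_abs
        have h0 := abs_nonneg (Real.sin ((x - y) / 2))
        have h1 := abs_nonneg (Real.sin ((x + y) / 2))
        have h2 := abs_nonneg ((x - y) / 2)
        nlinarith
    _ = |x - y| := by rw [abs_div, abs_two]; ring

/-- Integral comparison for the tail sum. -/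
lemma my_sum_rpow_le (p : ℝ) (hp : 1 < p) :
    ∑' j : ℕ, ((j : ℝ) + 2) ^ (-p) ≤ 1 / (p - 1) := by
  have key : ∀ j : ℕ, ((j : ℝ) + 2) ^ (-p) ≤
      (((j : ℝ) + 1) ^ (1 - p) - ((j : ℝ) + 2) ^ (1 - p)) / (p - 1) := by
    intro j
    have h1 : (0:ℝ) < (j : ℝ) + 1 := by positivity
    have h2 : ((j:ℝ) + 1) ≤ (j:ℝ) + 2 := by linarith
    have h0 : (0:ℝ) ∉ Set.uIcc ((j:ℝ)+1) ((j:ℝ)+2) := by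
      rw [Set.uIcc_of_le h2]
      intro h; exact absurd h.1 (by linarith)
    have hint : ∫ x in ((j:ℝ)+1)..((j:ℝ)+2), x ^ (-p) =
        ((((j:ℝ)+2) ^ (-p + 1) - ((j:ℝ)+1) ^ (-p + 1)) / (-p + 1)) :=
      integral_rpow (Or.inr ⟨by intro h; rw [neg_eq_iff_eq_neg] at h; linarith, h0⟩)
    have hmono : ∫ x in ((j:ℝ)+1)..((j:ℝ)+2), (((j:ℝ)+2) ^ (-p) : ℝ) ≤
        ∫ x in ((j:ℝ)+1)..((j:ℝ)+2), x ^ (-p) := by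
      apply intervalIntegral.integral_mono_on h2
      · exact intervalIntegrable_const
      · exact intervalIntegral.intervalIntegrable_rpow (Or.inr h0)
      · intro x hx
        apply Real.rpow_le_rpow_of_nonpos (lt_of_lt_of_le h1 hx.1) hx.2 (by linarith)
    rw [intervalIntegral.integral_const, smul_eq_mul] at hmono
    have : ((j:ℝ)+2) ^ (-p) ≤ (((j:ℝ)+2) ^ (-p + 1) - ((j:ℝ)+1) ^ (-p + 1)) / (-p + 1) := by
      calc ((j:ℝ)+2) ^ (-p) = ((j:ℝ)+2 - ((j:ℝ)+1)) * ((j:ℝ)+2) ^ (-p) := by ring_nf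
        _ ≤ _ := by rw [← hint]; exact hmono
    calc ((j:ℝ)+2) ^ (-p) ≤ (((j:ℝ)+2) ^ (-p + 1) - ((j:ℝ)+1) ^ (-p + 1)) / (-p + 1) := this
      _ = (((j:ℝ) + 1) ^ (1 - p) - ((j:ℝ) + 2) ^ (1 - p)) / (p - 1) := by
          rw [div_eq_div_iff (by linarith) (by linarith)]
          ring_nf
  apply Real.tsum_le_of_sum_range_le (fun n => by positivity)
  intro n
  calc ∑ j ∈ Finset.range n, ((j : ℝ) + 2) ^ (-p)
      ≤ ∑ j ∈ Finset.range n,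
        ((((j : ℝ) + 1) ^ (1 - p) - ((j : ℝ) + 2) ^ (1 - p)) / (p - 1)) :=
        Finset.sum_le_sum fun j _ => key j
    _ = (∑ j ∈ Finset.range n,
        ((((j : ℝ) + 1) ^ (1 - p)) - (((j : ℝ) + 1 + 1) ^ (1 - p)))) / (p - 1) := by
        rw [Finset.sum_div]
        congr 1 with j
        push_cast
        ring_nf
    _ = (((0:ℝ) + 1) ^ (1 - p) - (((n:ℝ) + 1) ^ (1 - p))) / (p - 1) := by
        have := Finset.sum_range_sub' (fun j : ℕ => ((j : ℝ) + 1) ^ (1 - p)) n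
        push_cast at this
        rw [this]
    _ ≤ 1 / (p - 1) := by
        have h1 : ((0:ℝ) + 1) ^ (1 - p) = 1 := by norm_num
        have h2 : (0:ℝ) ≤ ((n:ℝ) + 1) ^ (1 - p) := Real.rpow_nonneg (by positivity) _
        gcongr
        · linarith

theorem stmt_5 (γ α C : ℝ) (hγ0 : 0 < γ) (hγ1 : γ ≤ 1) (hα : γ + 1 < α) (hC : 0 < C)
    (K : ℝ → ℝ → ℝ)
    (hK : ∀ s t : ℝ, K s t =
      ∑' j : ℕ, C * ((j : ℝ) + 2) ^ (-α) * 2 * Real.cos (((j : ℝ) + 2) * π * s)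
        * Real.cos (((j : ℝ) + 2) * π * t)) :
    ∀ s ∈ Set.Icc (0 : ℝ) 1, ∀ t ∈ Set.Icc (0 : ℝ) 1,
      K s s - 2 * K s t + K t t ≤
        C * 2 ^ (3 - γ) * π ^ γ * (1 / (α - γ - 1)) * |t - s| ^ γ := by
  intro s hs t ht
  have hπ : (0:ℝ) < π := Real.pi_pos
  set d := |t - s| with hd
  have hd0 : 0 ≤ d := abs_nonneg _
  -- base summability
  have hbase : Summable (fun j : ℕ => ((j : ℝ) + 2) ^ (-α)) := by
    have h1 : Summable (fun n : ℕ => (n : ℝ) ^ (-α)) :=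
      Real.summable_nat_rpow.mpr (by linarith)
    have h2 := (summable_nat_add_iff 2).mpr h1
    refine h2.congr fun n => ?_
    push_cast
    ring_nf
  -- summability of each product series
  have hprod : ∀ u v : ℝ,
      Summable (fun j : ℕ => C * ((j : ℝ) + 2) ^ (-α) * 2 * Real.cos (((j : ℝ) + 2) * π * u)
        * Real.cos (((j : ℝ) + 2) * π * v)) := by
    intro u v
    apply Summable.of_abs
    apply Summable.of_nonneg_of_le (fun j => abs_nonneg _)
      (f := fun j : ℕ => C * 2 * ((j : ℝ) + 2) ^ (-α))
    · intro j
      have hx : (0:ℝ) ≤ ((j : ℝ) + 2) ^ (-α) := Real.rpow_nonneg (by positivity) _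
      have h1 := Real.abs_cos_le_one (((j : ℝ) + 2) * π * u)
      have h2 := Real.abs_cos_le_one (((j : ℝ) + 2) * π * v)
      rw [abs_mul, abs_mul, abs_mul, abs_mul]
      rw [abs_of_pos hC, abs_of_nonneg hx, abs_of_pos (by norm_num : (0:ℝ) < 2)]
      calc C * ((j : ℝ) + 2) ^ (-α) * 2 * |Real.cos (((j : ℝ) + 2) * π * u)|
            * |Real.cos (((j : ℝ) + 2) * π * v)|
          ≤ C * ((j : ℝ) + 2) ^ (-α) * 2 * 1 * 1 := by gcongr
        _ = C * 2 * ((j : ℝ) + 2) ^ (-α) := by ring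
    · exact hbase.mul_left _
  set f := fun j : ℕ => C * ((j : ℝ) + 2) ^ (-α) * 2 *
      (Real.cos (((j : ℝ) + 2) * π * s) - Real.cos (((j : ℝ) + 2) * π * t)) ^ 2 with hf
  set b := fun j : ℕ => C * 2 ^ (3 - γ) * π ^ γ * d ^ γ * ((j : ℝ) + 2) ^ (γ - α) with hb
  have hbsum : Summable b := by
    have h1 : Summable (fun n : ℕ => (n : ℝ) ^ (γ - α)) :=
      Real.summable_nat_rpow.mpr (by linarith)
    have h2 := (summable_nat_add_iff 2).mpr h1
    refine ((h2.congr fun n => ?_).mul_left _)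
    push_cast
    ring_nf
  have hfb : ∀ j : ℕ, f j ≤ b j := by
    intro j
    have hj2 : (0:ℝ) < (j : ℝ) + 2 := by positivity
    set m := |Real.cos (((j : ℝ) + 2) * π * s) - Real.cos (((j : ℝ) + 2) * π * t)| with hm
    have hm0 : 0 ≤ m := abs_nonneg _
    have hm2 : m ≤ 2 := by
      have h1 := Real.abs_cos_le_one (((j : ℝ) + 2) * π * s)
      have h2 := Real.abs_cos_le_one (((j : ℝ) + 2) * π * t)
      calc m ≤ |Real.cos (((j : ℝ) + 2) * π * s)| + |Real.cos (((j : ℝ) + 2) * π * t)| :=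
          abs_sub _ _
        _ ≤ 2 := by linarith
    have hmlip : m ≤ ((j : ℝ) + 2) * π * d := by
      calc m ≤ |((j : ℝ) + 2) * π * s - ((j : ℝ) + 2) * π * t| := my_cos_lip _ _
        _ = ((j : ℝ) + 2) * π * d := by
            rw [← mul_sub, abs_mul, abs_of_pos (by positivity), hd, abs_sub_comm]
    have hsq : (Real.cos (((j : ℝ) + 2) * π * s) - Real.cos (((j : ℝ) + 2) * π * t)) ^ 2
        = m ^ (2 - γ) * m ^ γ := by
      rw [← Real.rpow_add' hm0 (by norm_num : (2 - γ) + γ ≠ 0),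
        show (2 - γ) + γ = (2:ℝ) by ring,
        show m ^ (2:ℝ) = m ^ (2:ℕ) by rw [← Real.rpow_natCast m 2]; norm_num,
        hm, sq_abs]
    have hbound : m ^ (2 - γ) * m ^ γ ≤ 2 ^ (2 - γ) * (((j : ℝ) + 2) * π * d) ^ γ := by
      apply mul_le_mul
      · exact Real.rpow_le_rpow hm0 hm2 (by linarith)
      · exact Real.rpow_le_rpow hm0 hmlip (le_of_lt hγ0)
      · exact Real.rpow_nonneg hm0 _
      · exact Real.rpow_nonneg (by norm_num) _
    have hsplit : (((j : ℝ) + 2) * π * d) ^ γ = ((j : ℝ) + 2) ^ γ * π ^ γ * d ^ γ := by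
      rw [Real.mul_rpow (by positivity) hd0, Real.mul_rpow (by positivity) (le_of_lt hπ)]
    have hpow2 : (2:ℝ) * 2 ^ (2 - γ) = 2 ^ (3 - γ) := by
      rw [show (3:ℝ) - γ = 1 + (2 - γ) by ring, Real.rpow_add (by norm_num : (0:ℝ) < 2),
        Real.rpow_one]
    have hpowj : ((j : ℝ) + 2) ^ (-α) * ((j : ℝ) + 2) ^ γ = ((j : ℝ) + 2) ^ (γ - α) := by
      rw [← Real.rpow_add hj2]
      congr 1
      ring
    calc f j = C * ((j : ℝ) + 2) ^ (-α) * 2 * (m ^ (2 - γ) * m ^ γ) := by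
          simp only [hf]; rw [hsq]
      _ ≤ C * ((j : ℝ) + 2) ^ (-α) * 2 * (2 ^ (2 - γ) * (((j : ℝ) + 2) * π * d) ^ γ) := by
          apply mul_le_mul_of_nonneg_left hbound
          have := Real.rpow_nonneg (le_of_lt hj2) (-α)
          positivity
      _ = b j := by
          simp only [hb]
          rw [hsplit, ← hpow2, ← hpowj]
          ring
  have hfsum : Summable f := by
    apply Summable.of_nonneg_of_le (fun j => ?_) hfb hbsum
    simp only [hf]
    have := Real.rpow_nonneg (by positivity : (0:ℝ) ≤ (j : ℝ) + 2) (-α)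
    positivity
  -- rewrite the LHS as a single tsum
  have hcomb : K s s - 2 * K s t + K t t = ∑' j, f j := by
    rw [hK s s, hK s t, hK t t, ← tsum_mul_left, ← Summable.tsum_sub (hprod s s) ((hprod s t).mul_left 2),
      ← Summable.tsum_add (((hprod s s).sub ((hprod s t).mul_left 2))) (hprod t t)]
    congr 1 with j
    simp only [hf]
    ring
  rw [hcomb]
  calc ∑' j, f j ≤ ∑' j, b j := Summable.tsum_le_tsum hfb hfsum hbsum
    _ = C * 2 ^ (3 - γ) * π ^ γ * d ^ γ * ∑' j : ℕ, ((j : ℝ) + 2) ^ (γ - α) := tsum_mul_left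
    _ ≤ C * 2 ^ (3 - γ) * π ^ γ * d ^ γ * (1 / (α - γ - 1)) := by
        apply mul_le_mul_of_nonneg_left
        · have h := my_sum_rpow_le (α - γ) (by linarith)
          have he : ∀ j : ℕ, ((j : ℝ) + 2) ^ (γ - α) = ((j : ℝ) + 2) ^ (-(α - γ)) := by
            intro j; congr 1; ring
          rw [tsum_congr he]
          exact h
        · positivity
    _ = C * 2 ^ (3 - γ) * π ^ γ * (1 / (α - γ - 1)) * d ^ γ := by ring
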